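/- Set D = Σ_{μ ∈ Λ_{d,n}} μ₂. The polynomial det(M_d) ∈ ℤ[x] has degree at most D, and its coefficient of x^D equals det(M_d'). In particular, if det(M_d') ≠ 0, then det(M_d) = det(M_d') · p(x) for a monic polynomial p ∈ ℚ[x] of degree D. -/

import Mathlib

open Finset Polynomial

namespace Capelli

/-- The set `ℙ_{k,n}` of pairs `μ = (μ₁, μ₂)` of nonnegative integers with `μ₁ ≥ μ₂`,
`μ₁ + μ₂ = k` and `μ₂ ≤ n`. -/
def Pkn (n k : ℕ) : Finset (ℕ × ℕ) :=
  (Finset.range (k + 1) ×ˢ Finset.range (k + 1)).filter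
    (fun μ => μ.2 ≤ μ.1 ∧ μ.1 + μ.2 = k ∧ μ.2 ≤ n)

/-- The set `ℙ*_{k,n}` of pairs `ν = (ν₁, ν₂)` of nonnegative integers with `ν₁ ≥ ν₂`,
`ν₁ + ν₂ = k` and `ν₂ ≥ ⌊k/2⌋ - n` (written here additively to avoid truncated subtraction). -/
def PknStar (n k : ℕ) : Finset (ℕ × ℕ) :=
  (Finset.range (k + 1) ×ˢ Finset.range (k + 1)).filter
    (fun ν => ν.2 ≤ ν.1 ∧ ν.1 + ν.2 = k ∧ k / 2 ≤ ν.2 + n)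

/-- `Λ_{d,n} = ⋃_{k=0}^d ℙ_{k,n}`. -/
def Lam (n d : ℕ) : Finset (ℕ × ℕ) := (Finset.range (d + 1)).biUnion (Pkn n)

/-- `Λ*_{d,n} = ⋃_{k=0}^d ℙ*_{k,n}`. -/
def LamStar (n d : ℕ) : Finset (ℕ × ℕ) := (Finset.range (d + 1)).biUnion (PknStar n)

/-- `ℓ_ν = min(ν₁ - ν₂, 2n + 1 - (ν₁ - ν₂))`. -/
def ell (n : ℕ) (ν : ℕ × ℕ) : ℕ := min (ν.1 - ν.2) (2 * n + 1 - (ν.1 - ν.2))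

/-- `Λ_{d,n,j} = {μ ∈ Λ_{d,n} : μ₂ ≥ j}`. -/
def Lamj (n d j : ℕ) : Finset (ℕ × ℕ) := (Lam n d).filter (fun μ => j ≤ μ.2)

/-- `Λ*_{d,n,j} = {ν ∈ Λ*_{d,n} : ν₂ ≤ ⌊|ν|/2⌋ - j}`. -/
def LamStarj (n d j : ℕ) : Finset (ℕ × ℕ) :=
  (LamStar n d).filter (fun ν => ν.2 + j ≤ (ν.1 + ν.2) / 2)

/-- `ν_{(j)} = (|ν| - ⌊|ν|/2⌋ + j, ⌊|ν|/2⌋ - j)`. -/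
def nuSub (ν : ℕ × ℕ) (j : ℕ) : ℕ × ℕ :=
  (ν.1 + ν.2 - (ν.1 + ν.2) / 2 + j, (ν.1 + ν.2) / 2 - j)

/-- The polynomial `λ_{μ,ν}(x) = ((2x+1)ℓ_ν - ℓ_ν²)^{μ₂} (ν₁+ν₂)^{μ₁-μ₂} ∈ ℤ[x]`. -/
noncomputable def lamPoly (n : ℕ) (μ ν : ℕ × ℕ) : Polynomial ℤ :=
  ((2 * X + 1) * C (ell n ν : ℤ) - C ((ell n ν : ℤ) ^ 2)) ^ μ.2 *
    C ((ν.1 + ν.2 : ℕ) : ℤ) ^ (μ.1 - μ.2)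

/-- The row ordering: `μ ⪯ μ'` iff `μ₂ < μ₂'`, or `μ₂ = μ₂'` and `μ₁ ≤ μ₁'`. -/
def rowRel (μ μ' : ℕ × ℕ) : Prop := μ.2 < μ'.2 ∨ (μ.2 = μ'.2 ∧ μ.1 ≤ μ'.1)

/-- The column ordering: `ν ⩽ ν'` iff `⌊(ν₁-ν₂)/2⌋ < ⌊(ν₁'-ν₂')/2⌋`, or these are equal and
`|ν| ≤ |ν'|`.  (A further tie-break by the first coordinate is added so that the relation is
antisymmetric on all of `ℕ × ℕ`; on `Λ*_{d,n}` a tie in the first two comparisons forces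
equality, so this agrees with the ordering of the paper there.) -/
def colRel (ν ν' : ℕ × ℕ) : Prop :=
  (ν.1 - ν.2) / 2 < (ν'.1 - ν'.2) / 2 ∨
    ((ν.1 - ν.2) / 2 = (ν'.1 - ν'.2) / 2 ∧
      (ν.1 + ν.2 < ν'.1 + ν'.2 ∨ (ν.1 + ν.2 = ν'.1 + ν'.2 ∧ ν.1 ≤ ν'.1)))

instance : DecidableRel rowRel := fun a b =>
  inferInstanceAs (Decidable (a.2 < b.2 ∨ (a.2 = b.2 ∧ a.1 ≤ b.1)))

instance : IsTrans (ℕ × ℕ) rowRel := ⟨by intro a b c; unfold rowRel; omega⟩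

instance : IsTotal (ℕ × ℕ) rowRel := ⟨by intro a b; unfold rowRel; omega⟩

instance : IsAntisymm (ℕ × ℕ) rowRel :=
  ⟨by intro a b h1 h2; unfold rowRel at h1 h2; rw [Prod.ext_iff]; omega⟩

instance : DecidableRel colRel := fun a b =>
  inferInstanceAs (Decidable ((a.1 - a.2) / 2 < (b.1 - b.2) / 2 ∨
    ((a.1 - a.2) / 2 = (b.1 - b.2) / 2 ∧
      (a.1 + a.2 < b.1 + b.2 ∨ (a.1 + a.2 = b.1 + b.2 ∧ a.1 ≤ b.1)))))

instance : IsTrans (ℕ × ℕ) colRel := ⟨by intro a b c; unfold colRel; omega⟩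

instance : IsTotal (ℕ × ℕ) colRel := ⟨by intro a b; unfold colRel; omega⟩

instance : IsAntisymm (ℕ × ℕ) colRel :=
  ⟨by intro a b h1 h2; unfold colRel at h1 h2; rw [Prod.ext_iff]; omega⟩

/-- The elements of `Λ_{d,n}` listed in increasing order for `⪯`. -/
def rowList (n d : ℕ) : List (ℕ × ℕ) := (Lam n d).sort rowRel

/-- The elements of `Λ*_{d,n}` listed in increasing order for `⩽`. -/
def colList (n d : ℕ) : List (ℕ × ℕ) := (LamStar n d).sort colRel

/-- The elements of `Λ_{d,n,j}` listed in increasing order for `⪯`. -/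
def rowListJ (n d j : ℕ) : List (ℕ × ℕ) := (Lamj n d j).sort rowRel

/-- The elements of `Λ*_{d,n,j}` listed in increasing order for `⩽`. -/
def colListJ (n d j : ℕ) : List (ℕ × ℕ) := (LamStarj n d j).sort colRel

/-- The matrix `M_d = [λ_{μ,ν}]` with rows indexed by `Λ_{d,n}` (ordered by `⪯`) and columns
indexed by `Λ*_{d,n}` (ordered by `⩽`); since `|Λ_{d,n}| = |Λ*_{d,n}|` the column list has
length `(Lam n d).card` and the `getD` access below always hits an actual entry. -/
noncomputable def Md (n d : ℕ) : Matrix (Fin (Lam n d).card) (Fin (Lam n d).card) (Polynomial ℤ) :=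
  fun i j => lamPoly n ((rowList n d).getD i.val (0, 0)) ((colList n d).getD j.val (0, 0))

/-- The matrix `M_d' = [(2ℓ_ν)^{μ₂}(ν₁+ν₂)^{μ₁-μ₂}]` of leading coefficients. -/
def Md' (n d : ℕ) : Matrix (Fin (Lam n d).card) (Fin (Lam n d).card) ℤ :=
  fun i j =>
    let μ := (rowList n d).getD i.val (0, 0)
    let ν := (colList n d).getD j.val (0, 0)
    (2 * (ell n ν : ℤ)) ^ μ.2 * ((ν.1 + ν.2 : ℕ) : ℤ) ^ (μ.1 - μ.2)

/-- `S_{μ,ν,j}` with `m = μ₂ - j`: the complete homogeneous symmetric polynomial of degree `m`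
evaluated at `ℓ_{ν_{(0)}}, …, ℓ_{ν_{(j-1)}}, ℓ_ν`, i.e. the sum over all `(j+1)`-tuples
`(a₀, …, a_j)` of nonnegative integers with `a₀ + ⋯ + a_j = m` of
`ℓ_{ν_{(0)}}^{a₀} ⋯ ℓ_{ν_{(j-1)}}^{a_{j-1}} ℓ_ν^{a_j}`. -/
def Shs (n : ℕ) (ν : ℕ × ℕ) (j m : ℕ) : ℕ :=
  ∑ a ∈ Finset.Nat.antidiagonalTuple (j + 1) m,
    ∏ i : Fin (j + 1), (if (i : ℕ) < j then ell n (nuSub ν (i : ℕ)) else ell n ν) ^ a i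

/-- The matrix `N_j = [2^{μ₂-j}(ν₁+ν₂)^{μ₁-μ₂} S_{μ,ν,j}]` with rows indexed by `Λ_{d,n,j}`
(ordered by `⪯`) and columns indexed by `Λ*_{d,n,j}` (ordered by `⩽`). -/
def Ndj (n d j : ℕ) : Matrix (Fin (Lamj n d j).card) (Fin (Lamj n d j).card) ℤ :=
  fun i i' =>
    let μ := (rowListJ n d j).getD i.val (0, 0)
    let ν := (colListJ n d j).getD i'.val (0, 0)
    2 ^ (μ.2 - j) * ((ν.1 + ν.2 : ℕ) : ℤ) ^ (μ.1 - μ.2) * (Shs n ν j (μ.2 - j) : ℤ)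

/-- The Vandermonde matrix `V(a, a+1, …, a+s-1) = [(a+j)^{i-1}]_{1 ≤ i,j ≤ s}` (0-indexed
as `[(a+j)^i]_{0 ≤ i,j ≤ s-1}`), with the convention `0⁰ = 1`. -/
def vandInt (a s : ℕ) : Matrix (Fin s) (Fin s) ℤ :=
  fun i j => ((a + (j : ℕ) : ℕ) : ℤ) ^ (i : ℕ)

/-- `f(d,s) = #{(ν,ν') ∈ Λ*_{d,n} × Λ*_{d,n} : |ν| = |ν'|, ℓ_{ν'} < ℓ_ν, ℓ_ν + ℓ_{ν'} - 1 = s}`. -/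
def fds (n d : ℕ) (s : ℤ) : ℕ :=
  (((LamStar n d) ×ˢ (LamStar n d)).filter
    (fun p => p.1.1 + p.1.2 = p.2.1 + p.2.2 ∧ ell n p.2 < ell n p.1 ∧
      (ell n p.1 : ℤ) + (ell n p.2 : ℤ) - 1 = s)).card

/-- `g_k(s) = #{(ν,ν') ∈ ℙ*_{k,n} × ℙ*_{k,n} : ℓ_{ν'} < ℓ_ν, ℓ_ν + ℓ_{ν'} - 1 = s}`. -/
def gks (n k : ℕ) (s : ℤ) : ℕ :=
  ((PknStar n k ×ˢ PknStar n k).filter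
    (fun p => ell n p.2 < ell n p.1 ∧ (ell n p.1 : ℤ) + (ell n p.2 : ℤ) - 1 = s)).card

/-- Coefficient of a product at the sum of degree bounds. -/
lemma coeff_prod_bound {ι : Type*} (s : Finset ι) (f : ι → Polynomial ℤ) (w : ι → ℕ)
    (h : ∀ i ∈ s, (f i).natDegree ≤ w i) :
    (∏ i ∈ s, f i).coeff (∑ i ∈ s, w i) = ∏ i ∈ s, (f i).coeff (w i) := by
  induction s using Finset.cons_induction with
  | empty => simp
  | cons a s ha ih =>
    rw [Finset.prod_cons, Finset.sum_cons,
      Polynomial.coeff_mul_add_eq_of_natDegree_le (h a (Finset.mem_cons_self a s))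
        ((Polynomial.natDegree_prod_le _ _).trans
          (Finset.sum_le_sum fun i hi => h i (Finset.mem_cons_of_mem hi))),
      ih fun i hi => h i (Finset.mem_cons_of_mem hi), Finset.prod_cons]

lemma det_natDegree_le {k : ℕ} (M : Matrix (Fin k) (Fin k) (Polynomial ℤ)) (w : Fin k → ℕ)
    (h : ∀ i j, (M i j).natDegree ≤ w i) : M.det.natDegree ≤ ∑ i, w i := by
  rw [Matrix.det_apply]
  refine Polynomial.natDegree_sum_le_of_forall_le _ _ fun σ _ => ?_
  refine (Polynomial.natDegree_smul_le _ _).trans ?_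
  refine (Polynomial.natDegree_prod_le _ _).trans ?_
  calc ∑ i, (M (σ i) i).natDegree ≤ ∑ i, w (σ i) := Finset.sum_le_sum fun i _ => h _ _
    _ = ∑ i, w i := Equiv.sum_comp σ w

lemma det_coeff_eq {k : ℕ} (M : Matrix (Fin k) (Fin k) (Polynomial ℤ)) (w : Fin k → ℕ)
    (h : ∀ i j, (M i j).natDegree ≤ w i) :
    M.det.coeff (∑ i, w i) = Matrix.det (fun i j => (M i j).coeff (w i)) := by
  rw [Matrix.det_apply, Matrix.det_apply (M := fun i j => (M i j).coeff (w i)), Polynomial.finset_sum_coeff]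
  refine Finset.sum_congr rfl fun σ _ => ?_
  rw [Polynomial.coeff_smul]
  congr 1
  rw [← Equiv.sum_comp σ w]
  exact coeff_prod_bound Finset.univ (fun i => M (σ i) i) (fun i => w (σ i)) fun i _ => h _ _

lemma natDegree_lamPoly_le (n : ℕ) (μ ν : ℕ × ℕ) : (lamPoly n μ ν).natDegree ≤ μ.2 := by
  unfold lamPoly
  refine (Polynomial.natDegree_mul_le).trans ?_
  have h1 : ((2 * X + 1) * C (ell n ν : ℤ) - C ((ell n ν : ℤ) ^ 2)).natDegree ≤ 1 := by
    compute_degree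
  have h2 : (((2 * X + 1) * C (ell n ν : ℤ) - C ((ell n ν : ℤ) ^ 2)) ^ μ.2).natDegree ≤ μ.2 := by
    refine (Polynomial.natDegree_pow_le).trans ?_
    calc μ.2 * _ ≤ μ.2 * 1 := Nat.mul_le_mul_left _ h1
      _ = μ.2 := Nat.mul_one _
  have h3 : ((C ((ν.1 + ν.2 : ℕ) : ℤ)) ^ (μ.1 - μ.2)).natDegree = 0 := by
    rw [← Polynomial.C_pow]; exact Polynomial.natDegree_C _
  omega

lemma coeff_lamPoly (n : ℕ) (μ ν : ℕ × ℕ) :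
    (lamPoly n μ ν).coeff μ.2 =
      (2 * (ell n ν : ℤ)) ^ μ.2 * ((ν.1 + ν.2 : ℕ) : ℤ) ^ (μ.1 - μ.2) := by
  unfold lamPoly
  have h1 : ((2 * X + 1) * C (ell n ν : ℤ) - C ((ell n ν : ℤ) ^ 2)).natDegree ≤ 1 := by
    compute_degree
  have h2 : (((2 * X + 1) * C (ell n ν : ℤ) - C ((ell n ν : ℤ) ^ 2)) ^ μ.2).natDegree ≤ μ.2 * 1 :=
    (Polynomial.natDegree_pow_le).trans (Nat.mul_le_mul_left _ h1)
  have h3 : ((C ((ν.1 + ν.2 : ℕ) : ℤ)) ^ (μ.1 - μ.2)).natDegree ≤ 0 := by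
    rw [← Polynomial.C_pow]; exact le_of_eq (Polynomial.natDegree_C _)
  have := Polynomial.coeff_mul_add_eq_of_natDegree_le (f := ((2 * X + 1) * C (ell n ν : ℤ) -
      C ((ell n ν : ℤ) ^ 2)) ^ μ.2) (g := (C ((ν.1 + ν.2 : ℕ) : ℤ)) ^ (μ.1 - μ.2))
      (df := μ.2) (dg := 0) (by simpa using h2) h3
  rw [Nat.add_zero] at this
  rw [this]
  have h4 : (((2 * X + 1) * C (ell n ν : ℤ) - C ((ell n ν : ℤ) ^ 2)) ^ μ.2).coeff (μ.2 * 1) =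
      (((2 * X + 1) * C (ell n ν : ℤ) - C ((ell n ν : ℤ) ^ 2)).coeff 1) ^ μ.2 :=
    Polynomial.coeff_pow_of_natDegree_le h1
  rw [Nat.mul_one] at h4
  have hc : ((2 * X + 1) * C (ell n ν : ℤ) - C ((ell n ν : ℤ) ^ 2)).coeff 1
      = 2 * (ell n ν : ℤ) := by
    rw [Polynomial.coeff_sub, Polynomial.coeff_mul_C, Polynomial.coeff_add, Polynomial.coeff_C,
      Polynomial.coeff_one]
    norm_num [Polynomial.coeff_mul_X, mul_comm]
  rw [h4, hc, ← Polynomial.C_pow, Polynomial.coeff_C_zero]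

lemma sum_fin_getD (n d : ℕ) :
    ∑ i : Fin (Lam n d).card, ((rowList n d).getD i.val (0, 0)).2 = ∑ μ ∈ Lam n d, μ.2 := by
  have hlen : (rowList n d).length = (Lam n d).card := Finset.length_sort _
  have h1 : ∀ i : Fin (Lam n d).card, ((rowList n d).getD i.val (0, 0)) =
      (rowList n d).get (Fin.cast hlen.symm i) := fun i =>
    List.getD_eq_get (l := rowList n d) (d := (0, 0)) (Fin.cast hlen.symm i)
  calc ∑ i : Fin (Lam n d).card, ((rowList n d).getD i.val (0, 0)).2
      = ∑ i : Fin (Lam n d).card, ((rowList n d).get (Fin.cast hlen.symm i)).2 := by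
        simp only [h1]
    _ = ∑ i : Fin (rowList n d).length, ((rowList n d).get i).2 :=
        Fin.sum_congr' (fun i => ((rowList n d).get i).2) hlen.symm
    _ = ((rowList n d).map Prod.snd).sum := by
        rw [← List.sum_ofFn]
        show (List.ofFn (Prod.snd ∘ (rowList n d).get)).sum = _
        rw [← List.map_ofFn, List.ofFn_get]
    _ = ((Lam n d).toList.map Prod.snd).sum :=
        ((Finset.sort_perm_toList (Lam n d) rowRel).map Prod.snd).sum_eq
    _ = ∑ μ ∈ Lam n d, μ.2 := by
        rw [← Multiset.sum_coe, ← Multiset.map_coe, Finset.coe_toList]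
        rfl

/-- Set `D = Σ_{μ ∈ Λ_{d,n}} μ₂`.  The polynomial `det(M_d) ∈ ℤ[x]` has degree at
most `D`, and its coefficient of `x^D` equals `det(M_d')`.  In particular, if `det(M_d') ≠ 0`,
then `det(M_d) = det(M_d') · p(x)` for a monic polynomial `p ∈ ℚ[x]` of degree `D`. -/
theorem det_Md_leading (n d : ℕ) :
    (Md n d).det.degree ≤ (∑ μ ∈ Lam n d, μ.2 : ℕ) ∧
    (Md n d).det.coeff (∑ μ ∈ Lam n d, μ.2) = (Md' n d).det ∧
    ((Md' n d).det ≠ 0 → ∃ p : Polynomial ℚ, p.Monic ∧ p.natDegree = ∑ μ ∈ Lam n d, μ.2 ∧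
      (Md n d).det.map (Int.castRingHom ℚ) = C ((Md' n d).det : ℚ) * p) := by
  set D : ℕ := ∑ μ ∈ Lam n d, μ.2 with hD
  set w : Fin (Lam n d).card → ℕ := fun i => ((rowList n d).getD i.val (0, 0)).2 with hw
  have hsum : ∑ i, w i = D := sum_fin_getD n d
  have hdeg : ∀ i j, ((Md n d) i j).natDegree ≤ w i := fun i j => natDegree_lamPoly_le _ _ _
  have hnd : (Md n d).det.natDegree ≤ D := hsum ▸ det_natDegree_le _ w hdeg
  have hdegle : (Md n d).det.degree ≤ (D : WithBot ℕ) :=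
    Polynomial.degree_le_natDegree.trans (by exact_mod_cast hnd)
  have hcoeff : (Md n d).det.coeff D = (Md' n d).det := by
    rw [← hsum, det_coeff_eq _ w hdeg]
    congr 1
    ext i j
    exact coeff_lamPoly n _ _
  refine ⟨hdegle, hcoeff, fun hne => ?_⟩
  set P : Polynomial ℚ := (Md n d).det.map (Int.castRingHom ℚ) with hP
  have hPcoeff : P.coeff D = ((Md' n d).det : ℚ) := by
    rw [hP, Polynomial.coeff_map, hcoeff]; rfl
  have hne' : ((Md' n d).det : ℚ) ≠ 0 := Int.cast_ne_zero.mpr hne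
  have hPdeg : P.degree ≤ (D : WithBot ℕ) :=
    (Polynomial.degree_map_le).trans hdegle
  have hPdegeq : P.natDegree = D := by
    have hPne : P ≠ 0 := fun h => hne' (by rw [← hPcoeff, h, Polynomial.coeff_zero])
    have h1 : P.natDegree ≤ D := Polynomial.natDegree_le_iff_degree_le.mpr hPdeg
    have h2 : D ≤ P.natDegree := Polynomial.le_natDegree_of_ne_zero (hPcoeff ▸ hne')
    omega
  refine ⟨C ((Md' n d).det : ℚ)⁻¹ * P, ?_, ?_, ?_⟩
  · unfold Polynomial.Monic
    rw [Polynomial.leadingCoeff, Polynomial.natDegree_C_mul (inv_ne_zero hne'),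
      hPdegeq, Polynomial.coeff_C_mul, hPcoeff, inv_mul_cancel₀ hne']
  · rw [Polynomial.natDegree_C_mul (inv_ne_zero hne'), hPdegeq]
  · rw [← mul_assoc, ← Polynomial.C_mul, mul_inv_cancel₀ hne', Polynomial.C_1, one_mul]

end Capelli
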